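/- Let G be a finite directed graph and r a vertex of G. The collection of (arc sets of) all r-directed spanning trees of G (directed spanning trees of G rooted at r) satisfies the weak exchange property: for every pair of distinct r-directed spanning trees T and T' of G, there exist e ∈ A(T) \ A(T') and e' ∈ A(T') \ A(T) such that T − e + e' is an r-directed spanning tree of G. -/

import Mathlib

/-- The vertex set of a set of arcs. -/
def arcVerts {V : Type*} [DecidableEq V] (T : Finset (V × V)) : Finset V :=
  T.image Prod.fst ∪ T.image Prod.snd

/-- The in-degree of a vertex `v` in a set of arcs `T`. -/
def inDeg {V : Type*} [DecidableEq V] (T : Finset (V × V)) (v : V) : ℕ :=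
  (T.filter fun e => e.2 = v).card

/-- The step relation of a set of arcs: `arcRel T a b` iff `(a, b)` is an arc of `T`. -/
def arcRel {V : Type*} (T : Finset (V × V)) : V → V → Prop := fun a b => (a, b) ∈ T

/-- `T` is (the arc set of) a directed tree rooted at `r`: the root has in-degree `0`,
every other vertex has in-degree exactly `1`, and every vertex is reachable from `r`. -/
def IsDirTree {V : Type*} [DecidableEq V] (T : Finset (V × V)) (r : V) : Prop :=
  inDeg T r = 0 ∧ (∀ v ∈ arcVerts T, v ≠ r → inDeg T v = 1) ∧
    ∀ v ∈ arcVerts T, Relation.ReflTransGen (arcRel T) r v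

/-- `T` is a directed spanning tree of the digraph with arc set `A`, rooted at `r`. -/
def IsRDirSpanningTree {V : Type*} [DecidableEq V] (A : Finset (V × V)) (r : V)
    (T : Finset (V × V)) : Prop :=
  T ⊆ A ∧ IsDirTree T r ∧ ∀ v, v ≠ r → v ∈ arcVerts T

lemma snd_mem_arcVerts {V : Type*} [DecidableEq V] {T : Finset (V × V)} {f : V × V}
    (hf : f ∈ T) : f.2 ∈ arcVerts T :=
  Finset.mem_union_right _ (Finset.mem_image_of_mem _ hf)

lemma fst_mem_arcVerts {V : Type*} [DecidableEq V] {T : Finset (V × V)} {f : V × V}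
    (hf : f ∈ T) : f.1 ∈ arcVerts T :=
  Finset.mem_union_left _ (Finset.mem_image_of_mem _ hf)

lemma cross_lemma {α : Type*} {Q : α → α → Prop} {R : α → Prop} {r a : α}
    (h : Relation.ReflTransGen Q r a) :
    R r → ¬ R a → ∃ u v, Q u v ∧ R u ∧ ¬ R v := by
  induction h with
  | refl => exact fun hr ha => absurd hr ha
  | @tail b c hb hbc ih =>
    intro hr ha
    by_cases hR : R b
    · exact ⟨b, c, hbc, hR, ha⟩
    · exact ih hr hR

/-- The collection of `r`-directed spanning trees of a finite digraph satisfies the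
weak exchange property. -/
theorem stmt2 {V : Type*} [Fintype V] [DecidableEq V] (A : Finset (V × V)) (r : V)
    (T T' : Finset (V × V))
    (hT : IsRDirSpanningTree A r T) (hT' : IsRDirSpanningTree A r T') (hne : T ≠ T') :
    ∃ e ∈ T \ T', ∃ e' ∈ T' \ T, IsRDirSpanningTree A r (insert e' (T.erase e)) := by
  obtain ⟨hTA, ⟨hTr, hTdeg, hTreach⟩, hTspan⟩ := hT
  obtain ⟨hT'A, ⟨hT'r, hT'deg, hT'reach⟩, hT'span⟩ := hT'
  have hTrE : T.filter (fun e => e.2 = r) = ∅ := Finset.card_eq_zero.mp hTr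
  have hT'rE : T'.filter (fun e => e.2 = r) = ∅ := Finset.card_eq_zero.mp hT'r
  -- heads of arcs are never r
  have hheadT : ∀ f ∈ T, f.2 ≠ r := by
    intro f hf hfr
    have : f ∈ T.filter (fun e => e.2 = r) := Finset.mem_filter.2 ⟨hf, hfr⟩
    simp [hTrE] at this
  have hheadT' : ∀ f ∈ T', f.2 ≠ r := by
    intro f hf hfr
    have : f ∈ T'.filter (fun e => e.2 = r) := Finset.mem_filter.2 ⟨hf, hfr⟩
    simp [hT'rE] at this
  -- T' \ T is nonempty
  have hex : ∃ f, f ∈ T' ∧ f ∉ T := by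
    by_contra h
    push_neg at h
    have hsub : T' ⊆ T := fun f hf => h f hf
    obtain ⟨f, hfT, hfT'⟩ : ∃ f, f ∈ T ∧ f ∉ T' := by
      by_contra h2; push_neg at h2
      exact hne (Finset.Subset.antisymm (fun f hf => h2 f hf) hsub)
    have hf2r : f.2 ≠ r := hheadT f hfT
    have h1 : inDeg T' f.2 = 1 := hT'deg f.2 (hT'span f.2 hf2r) hf2r
    obtain ⟨g, hg⟩ := Finset.card_eq_one.mp h1
    have hgT' : g ∈ T' ∧ g.2 = f.2 := by
      have : g ∈ T'.filter (fun e => e.2 = f.2) := by rw [hg]; exact Finset.mem_singleton_self g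
      exact Finset.mem_filter.mp this
    have hgf : g ≠ f := fun h' => hfT' (h' ▸ hgT'.1)
    have hpair : ({g, f} : Finset (V × V)) ⊆ T.filter (fun e => e.2 = f.2) := by
      intro x hx
      rcases Finset.mem_insert.mp hx with h' | h'
      · subst h'; exact Finset.mem_filter.2 ⟨hsub hgT'.1, hgT'.2⟩
      · rw [Finset.mem_singleton.mp h']; exact Finset.mem_filter.2 ⟨hfT, rfl⟩
    have h2 : inDeg T f.2 = 1 := hTdeg f.2 (hTspan f.2 hf2r) hf2r
    have := Finset.card_le_card hpair
    rw [Finset.card_pair hgf] at this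
    rw [inDeg] at h2
    omega
  obtain ⟨e'', he''T', he''T⟩ := hex
  -- find (u,v) ∈ T' \ T with u reachable via T' ∩ T
  set R : V → Prop := fun x => Relation.ReflTransGen (arcRel (T' ∩ T)) r x with hR
  have key : ∃ u v, (u, v) ∈ T' ∧ (u, v) ∉ T ∧ R u := by
    by_cases ha : R e''.1
    · exact ⟨e''.1, e''.2, he''T', he''T, ha⟩
    · have hreach : Relation.ReflTransGen (arcRel T') r e''.1 :=
        hT'reach _ (fst_mem_arcVerts he''T')
      obtain ⟨u, v, huv, hu, hv⟩ := cross_lemma hreach Relation.ReflTransGen.refl ha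
      refine ⟨u, v, huv, ?_, hu⟩
      intro hmem
      exact hv (hu.tail (show (u, v) ∈ T' ∩ T from Finset.mem_inter.2 ⟨huv, hmem⟩))
  obtain ⟨u, v, he'T', he'T, hu⟩ := key
  have hvr : v ≠ r := hheadT' _ he'T'
  have hvT : v ∈ arcVerts T := hTspan v hvr
  have hdegv : inDeg T v = 1 := hTdeg v hvT hvr
  obtain ⟨e, he⟩ := Finset.card_eq_one.mp hdegv
  have heT : e ∈ T ∧ e.2 = v := by
    have : e ∈ T.filter (fun f => f.2 = v) := by rw [he]; exact Finset.mem_singleton_self e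
    exact Finset.mem_filter.mp this
  have heuniq : ∀ f ∈ T, f.2 = v → f = e := by
    intro f hf h2
    have : f ∈ T.filter (fun f => f.2 = v) := Finset.mem_filter.2 ⟨hf, h2⟩
    rw [he] at this
    exact Finset.mem_singleton.mp this
  have heT' : e ∉ T' := by
    intro h
    have hne' : e ≠ (u, v) := fun h' => he'T (h' ▸ heT.1)
    have hvT' : v ∈ arcVerts T' := snd_mem_arcVerts he'T'
    have h1 : inDeg T' v = 1 := hT'deg v hvT' hvr
    have hpair : ({e, (u, v)} : Finset (V × V)) ⊆ T'.filter (fun f => f.2 = v) := by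
      intro x hx
      rcases Finset.mem_insert.mp hx with h' | h'
      · subst h'; exact Finset.mem_filter.2 ⟨h, heT.2⟩
      · rw [Finset.mem_singleton.mp h']; exact Finset.mem_filter.2 ⟨he'T', rfl⟩
    have := Finset.card_le_card hpair
    rw [Finset.card_pair hne'] at this
    rw [inDeg] at h1
    omega
  refine ⟨e, Finset.mem_sdiff.2 ⟨heT.1, heT'⟩, (u, v), Finset.mem_sdiff.2 ⟨he'T', he'T⟩, ?_⟩
  set N : Finset (V × V) := insert (u, v) (T.erase e) with hN
  -- N ⊆ A
  have hNA : N ⊆ A := by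
    intro x hx
    rcases Finset.mem_insert.mp hx with h' | h'
    · exact h' ▸ hT'A he'T'
    · exact hTA (Finset.mem_of_mem_erase h')
  -- reachability of u, v in N
  have hmono : ∀ x y, arcRel (T' ∩ T) x y → arcRel N x y := by
    intro x y hxy
    have h := Finset.mem_inter.mp hxy
    have hne' : (x, y) ≠ e := fun h' => heT' (h' ▸ h.1)
    exact Finset.mem_insert_of_mem (Finset.mem_erase.2 ⟨hne', h.2⟩)
  have huN : Relation.ReflTransGen (arcRel N) r u := Relation.ReflTransGen.mono hmono _ _ hu
  have hvN : Relation.ReflTransGen (arcRel N) r v :=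
    huN.tail (Finset.mem_insert_self _ _)
  have lift : ∀ w, Relation.ReflTransGen (arcRel T) r w →
      Relation.ReflTransGen (arcRel N) r w := by
    intro w h
    induction h with
    | refl => exact Relation.ReflTransGen.refl
    | @tail b c hb hbc ih =>
      by_cases hbe : (b, c) = e
      · have hcv : c = v := by rw [← heT.2, ← hbe]
        exact hcv ▸ hvN
      · exact ih.tail (Finset.mem_insert_of_mem (Finset.mem_erase.2 ⟨hbe, hbc⟩))
  -- spanning for N
  have hspanN : ∀ w, w ≠ r → w ∈ arcVerts N := by
    intro w hw
    by_cases hwv : w = v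
    · subst hwv
      exact snd_mem_arcVerts (Finset.mem_insert_self _ _)
    · have h1 : inDeg T w = 1 := hTdeg w (hTspan w hw) hw
      obtain ⟨f, hf⟩ := Finset.card_eq_one.mp h1
      have hfT : f ∈ T ∧ f.2 = w := by
        have : f ∈ T.filter (fun g => g.2 = w) := by rw [hf]; exact Finset.mem_singleton_self f
        exact Finset.mem_filter.mp this
      have hfe : f ≠ e := by
        intro h'
        exact hwv (by rw [← hfT.2, h', heT.2])
      have hfN : f ∈ N := Finset.mem_insert_of_mem (Finset.mem_erase.2 ⟨hfe, hfT.1⟩)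
      exact hfT.2 ▸ snd_mem_arcVerts hfN
  -- in-degree computations
  have hfilter : ∀ w, N.filter (fun f => f.2 = w) =
      if v = w then insert (u, v) ((T.erase e).filter (fun f => f.2 = w))
      else (T.erase e).filter (fun f => f.2 = w) := by
    intro w
    rw [hN, Finset.filter_insert]
  have hdegNr : inDeg N r = 0 := by
    rw [inDeg, hfilter, if_neg hvr, Finset.filter_erase, hTrE]
    simp
  have hdegN1 : ∀ w ∈ arcVerts N, w ≠ r → inDeg N w = 1 := by
    intro w _ hw
    by_cases hwv : w = v
    · subst hwv
      rw [inDeg, hfilter, if_pos rfl, Finset.filter_erase, he]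
      simp
    · rw [inDeg, hfilter, if_neg (fun h => hwv h.symm), Finset.filter_erase]
      have heni : e ∉ T.filter (fun f => f.2 = w) := by
        intro h'
        exact hwv ((Finset.mem_filter.mp h').2 ▸ heT.2) |>.elim
      rw [Finset.erase_eq_of_notMem heni]
      exact hTdeg w (hTspan w hw) hw
  have hreachN : ∀ w ∈ arcVerts N, Relation.ReflTransGen (arcRel N) r w := by
    intro w _
    by_cases hwr : w = r
    · exact hwr ▸ Relation.ReflTransGen.refl
    · exact lift w (hTreach w (hTspan w hwr))
  exact ⟨hNA, ⟨hdegNr, hdegN1, hreachN⟩, hspanN⟩
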